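/- For a nonresonant vector v ∈ ℂ^d and a finitely additively generated monoid A with eigenvalue map ν : A → ℂ satisfying ν(ℓ+ℓ') = ν(ℓ)+ν(ℓ') and ν(ℓ) = 0 iff ℓ = 0 (where ν(ℓ) = v₁ν_{1,ℓ}+⋯+v_dν_{d,ℓ}): if a function z : ℝ × ℂ^d → ℂ is a finite linear combination of terms τ^k exp(ν_ℓ^u) (k ≥ 0, ℓ ∈ A) and satisfies ∂z/∂τ + v·∇_u z = 0 with z(0,0) = 0, then z is identically zero. -/

import Mathlib

open Polynomial

/-- Derivative step: if an exponential polynomial vanishes identically on `ℝ`,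
then so does the one obtained by applying `P ↦ P' + (l - l0)•P` to each coefficient. -/
private lemma exp_poly_step (Λ : Finset ℂ) (l0 : ℂ) (P : ℂ → ℂ[X])
    (h : ∀ t : ℝ, ∑ l ∈ Λ, (P l).eval (t : ℂ) * Complex.exp (l * t) = 0) :
    ∀ t : ℝ, ∑ l ∈ Λ, ((P l).derivative + (l - l0) • P l).eval (t : ℂ) * Complex.exp (l * t) = 0 := by
  have hderiv : ∀ t : ℝ,
      ∑ l ∈ Λ, ((P l).derivative.eval (t:ℂ) + l * (P l).eval (t:ℂ)) * Complex.exp (l * t) = 0 := by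
    intro t
    have hterm : ∀ l ∈ Λ, HasDerivAt (fun s : ℝ => (P l).eval (s:ℂ) * Complex.exp (l * s))
        (((P l).derivative.eval (t:ℂ) + l * (P l).eval (t:ℂ)) * Complex.exp (l * t)) t := by
      intro l _
      have h1 : HasDerivAt (fun s : ℂ => (P l).eval s * Complex.exp (l * s))
          ((P l).derivative.eval (t:ℂ) * Complex.exp (l * (t:ℂ))
            + (P l).eval (t:ℂ) * (Complex.exp (l * (t:ℂ)) * (l * 1))) (t:ℂ) :=
        ((P l).hasDerivAt _).mul (((hasDerivAt_id _).const_mul l).cexp)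
      have h2 := h1.comp_ofReal
      convert h2 using 1
      ring
    have hsum := HasDerivAt.fun_sum hterm
    have hzero : (fun s : ℝ => ∑ l ∈ Λ, (P l).eval (s:ℂ) * Complex.exp (l * s))
        = fun _ => (0:ℂ) := funext h
    rw [hzero] at hsum
    exact hsum.unique (hasDerivAt_const t 0)
  intro t
  have key : (∑ l ∈ Λ, ((P l).derivative + (l - l0) • P l).eval (t:ℂ) * Complex.exp (l * t))
      = (∑ l ∈ Λ, ((P l).derivative.eval (t:ℂ) + l * (P l).eval (t:ℂ)) * Complex.exp (l * t))
        - l0 * ∑ l ∈ Λ, (P l).eval (t:ℂ) * Complex.exp (l * t) := by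
    rw [Finset.mul_sum, ← Finset.sum_sub_distrib]
    refine Finset.sum_congr rfl fun l _ => ?_
    simp only [Polynomial.eval_add, Polynomial.eval_smul, smul_eq_mul]
    ring
  rw [key, hderiv t, h t]
  ring

/-- Linear independence of the functions `t ↦ t^k e^{l t}` on `ℝ`, phrased as:
an identically vanishing exponential polynomial has all polynomial coefficients zero. -/
private lemma exp_poly_indep : ∀ (Λ : Finset ℂ), ∀ (P : ℂ → ℂ[X]),
    (∀ t : ℝ, ∑ l ∈ Λ, (P l).eval (t:ℂ) * Complex.exp (l * t) = 0) →
    ∀ l ∈ Λ, P l = 0 := by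
  intro Λ
  induction Λ using Finset.strongInduction with
  | _ Λ IH =>
    intro P h
    rcases Λ.eq_empty_or_nonempty with rfl | hne
    · intro l hl; simp at hl
    obtain ⟨l0, hl0⟩ := hne
    classical
    set T : ℂ → ℂ[X] → ℂ[X] := fun l Q => Q.derivative + (l - l0) • Q with hT
    have hiter : ∀ n : ℕ, ∀ t : ℝ,
        ∑ l ∈ Λ, ((T l)^[n] (P l)).eval (t:ℂ) * Complex.exp (l * t) = 0 := by
      intro n
      induction n with
      | zero => simpa using h
      | succ n ih =>
        have hstep := exp_poly_step Λ l0 (fun l => (T l)^[n] (P l)) ih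
        intro t
        refine Eq.trans ?_ (hstep t)
        refine Finset.sum_congr rfl fun l _ => ?_
        rw [Function.iterate_succ_apply']
    set N := (P l0).natDegree + 1 with hN
    have hT0 : T l0 = ⇑Polynomial.derivative := by
      funext Q; simp [hT]
    have hkill : (T l0)^[N] (P l0) = 0 := by
      rw [hT0]
      exact Polynomial.iterate_derivative_eq_zero (Nat.lt_succ_self _)
    have hrest : ∀ l ∈ Λ.erase l0, (T l)^[N] (P l) = 0 := by
      refine IH (Λ.erase l0) (Finset.erase_ssubset hl0) _ ?_
      intro t
      have h2 := hiter N t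
      rw [← Finset.add_sum_erase _ _ hl0, hkill] at h2
      simpa using h2
    have hTinj : ∀ l, l ≠ l0 → ∀ Q : ℂ[X], T l Q = 0 → Q = 0 := by
      intro l hl Q hQ
      by_contra hQ0
      have hd : ((l - l0) • Q).degree = Q.degree := by
        rw [Polynomial.smul_eq_C_mul, Polynomial.degree_C_mul (sub_ne_zero.mpr hl)]
      have hlt : Q.derivative.degree < ((l - l0) • Q).degree := by
        rw [hd]; exact Polynomial.degree_derivative_lt hQ0
      have hdeg := Polynomial.degree_add_eq_right_of_degree_lt hlt
      simp only [hT] at hQ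
      rw [hQ, Polynomial.degree_zero, hd] at hdeg
      exact hQ0 (Polynomial.degree_eq_bot.mp hdeg.symm)
    have hiterinj : ∀ l, l ≠ l0 → ∀ n : ℕ, (T l)^[n] (P l) = 0 → P l = 0 := by
      intro l hl n
      induction n with
      | zero => simp
      | succ n ih =>
        intro h0
        rw [Function.iterate_succ_apply'] at h0
        exact ih (hTinj l hl _ h0)
    have hPerase : ∀ l ∈ Λ.erase l0, P l = 0 := fun l hl =>
      hiterinj l (Finset.ne_of_mem_erase hl) N (hrest l hl)
    have hP0 : P l0 = 0 := by
      have hev : ∀ t : ℝ, (P l0).eval (t:ℂ) = 0 := by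
        intro t
        have h2 := h t
        rw [← Finset.add_sum_erase _ _ hl0] at h2
        have hzer : ∑ l ∈ Λ.erase l0, (P l).eval (t:ℂ) * Complex.exp (l * t) = 0 :=
          Finset.sum_eq_zero fun l hl => by rw [hPerase l hl]; simp
        rw [hzer, add_zero] at h2
        exact (mul_eq_zero.mp h2).resolve_right (Complex.exp_ne_zero _)
      have hroots : {x : ℂ | (P l0).IsRoot x}.Infinite := by
        refine Set.Infinite.mono ?_ (Set.infinite_range_of_injective Complex.ofReal_injective)
        rintro x ⟨t, rfl⟩
        exact hev t
      exact Polynomial.eq_zero_of_infinite_isRoot _ hroots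
    intro l hl
    rcases eq_or_ne l l0 with rfl | hne
    · exact hP0
    · exact hPerase l (Finset.mem_erase.mpr ⟨hne, hl⟩)

open Classical in
/-- A constant exponential polynomial equals its constant coefficient. -/
private lemma exp_poly_const {ι : Type*} (S : Finset ι) (k : ι → ℕ) (μ a : ι → ℂ) (C : ℂ)
    (h : ∀ t : ℝ, ∑ p ∈ S, a p * (t:ℂ) ^ (k p) * Complex.exp (μ p * t) = C) :
    C = ∑ p ∈ S, (if k p = 0 ∧ μ p = 0 then a p else 0) := by
  classical
  set Λ : Finset ℂ := insert 0 (S.image μ) with hΛ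
  set P : ℂ → ℂ[X] := fun l =>
    (∑ p ∈ S.filter (fun p => μ p = l), Polynomial.C (a p) * Polynomial.X ^ (k p))
      - (if l = 0 then Polynomial.C C else 0) with hP
  have hmaps : ∀ p ∈ S, μ p ∈ Λ := fun p hp =>
    Finset.mem_insert_of_mem (Finset.mem_image_of_mem μ hp)
  have hsum : ∀ t : ℝ, ∑ l ∈ Λ, (P l).eval (t:ℂ) * Complex.exp (l * t) = 0 := by
    intro t
    have e0 : ∀ l, (P l).eval (t:ℂ)
        = (∑ p ∈ S.filter (fun p => μ p = l), a p * (t:ℂ) ^ (k p))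
          - (if l = 0 then C else 0) := by
      intro l
      simp [hP, Polynomial.eval_finset_sum, apply_ite (Polynomial.eval (t:ℂ))]
    have e1 : ∑ l ∈ Λ, (∑ p ∈ S.filter (fun p => μ p = l), a p * (t:ℂ) ^ (k p))
          * Complex.exp (l * t)
        = ∑ p ∈ S, a p * (t:ℂ) ^ (k p) * Complex.exp (μ p * t) := by
      rw [← Finset.sum_fiberwise_of_maps_to hmaps
        (fun p => a p * (t:ℂ) ^ (k p) * Complex.exp (μ p * t))]
      refine Finset.sum_congr rfl fun l _ => ?_
      rw [Finset.sum_mul]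
      refine Finset.sum_congr rfl fun p hp => ?_
      rw [(Finset.mem_filter.mp hp).2]
    have e2 : ∑ l ∈ Λ, (if l = 0 then C else 0) * Complex.exp (l * t) = C := by
      have : ∀ l ∈ Λ, (if l = 0 then C else 0) * Complex.exp (l * t)
          = (if (0:ℂ) = l then C * Complex.exp (l * t) else 0) := by
        intro l _
        by_cases hl : l = 0 <;> simp [hl, eq_comm]
      rw [Finset.sum_congr rfl this, Finset.sum_ite_eq]
      simp [hΛ]
    calc ∑ l ∈ Λ, (P l).eval (t:ℂ) * Complex.exp (l * t)
        = ∑ l ∈ Λ, ((∑ p ∈ S.filter (fun p => μ p = l), a p * (t:ℂ) ^ (k p))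
            * Complex.exp (l * t) - (if l = 0 then C else 0) * Complex.exp (l * t)) := by
          refine Finset.sum_congr rfl fun l _ => ?_
          rw [e0 l, sub_mul]
      _ = (∑ p ∈ S, a p * (t:ℂ) ^ (k p) * Complex.exp (μ p * t)) - C := by
          rw [Finset.sum_sub_distrib, e1, e2]
      _ = 0 := by rw [h t, sub_self]
  have hP0 : P 0 = 0 := exp_poly_indep Λ P hsum 0 (Finset.mem_insert_self _ _)
  have hc : (P 0).coeff 0 = 0 := by rw [hP0]; simp
  rw [hP] at hc
  simp only [Polynomial.coeff_sub, Polynomial.finset_sum_coeff, if_pos rfl, if_true,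
    Polynomial.coeff_C_mul, Polynomial.coeff_X_pow, Polynomial.coeff_C] at hc
  have hc2 : C = ∑ p ∈ S.filter (fun p => μ p = 0), (if k p = 0 then a p else 0) := by
    have := sub_eq_zero.mp hc
    rw [← this]
    refine Finset.sum_congr rfl fun p _ => ?_
    by_cases hk : k p = 0 <;> simp [hk, eq_comm]
  rw [hc2, Finset.sum_filter]
  refine Finset.sum_congr rfl fun p _ => ?_
  by_cases h1 : μ p = 0 <;> by_cases h2 : k p = 0 <;> simp [h1, h2]

/-- Transport lemma, autonomous-perturbation version: a polynomially smooth
solution of `∂z/∂τ + v·∇_u z = 0` with `z(0,0)=0` vanishes identically. -/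
theorem transport_lemma_monoid {d : ℕ} {A : Type*} [AddCommMonoid A]
    (ν : Fin d → A → ℂ)
    (hν : ∀ (j : Fin d) (ℓ ℓ' : A), ν j (ℓ + ℓ') = ν j ℓ + ν j ℓ')
    (v : Fin d → ℂ)
    (hv : ∀ ℓ : A, (∑ j, v j * ν j ℓ) = 0 ↔ ℓ = 0)
    (z : ℝ → (Fin d → ℂ) → ℂ)
    (hpolysmooth : ∃ (S : Finset (ℕ × A)) (c : ℕ × A → ℂ),
      ∀ (τ : ℝ) (u : Fin d → ℂ),
        z τ u = ∑ p ∈ S, c p * (τ : ℂ) ^ p.1 * Complex.exp (∑ j, u j * ν j p.2))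
    (hpde : ∀ (τ : ℝ) (u : Fin d → ℂ),
      HasDerivAt (fun s : ℝ => z (τ + s) (u + (s : ℂ) • v)) 0 0)
    (hinit : z 0 0 = 0) :
    ∀ (τ : ℝ) (u : Fin d → ℂ), z τ u = 0 := by
  classical
  obtain ⟨S, c, hz⟩ := hpolysmooth
  set μ : ℕ × A → ℂ := fun p => ∑ j, v j * ν j p.2 with hμ
  have hν0 : ∀ j : Fin d, ν j (0:A) = 0 := by
    intro j
    have h00 := hν j 0 0
    rw [add_zero] at h00
    exact (left_eq_add.mp h00)
  have key : ∀ (τ0 : ℝ) (u0 : Fin d → ℂ),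
      z τ0 u0 = ∑ p ∈ S, (if p.1 = 0 ∧ μ p = 0 then c p else 0) := by
    intro τ0 u0
    set w0 : Fin d → ℂ := u0 - (τ0:ℂ) • v with hw0
    set gC : ℝ → ℂ := fun t => z t ((t:ℂ) • v + w0) with hg
    have hgderiv : ∀ t : ℝ, HasDerivAt gC 0 t := by
      intro t
      have h1 := hpde t ((t:ℂ) • v + w0)
      have h2 : (fun s : ℝ => z (t + s) (((t:ℂ) • v + w0) + (s:ℂ) • v))
          = fun s : ℝ => gC (t + s) := by
        funext s
        simp only [hg]
        congr 1
        rw [Complex.ofReal_add, add_smul]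
        abel
      rw [h2] at h1
      have h1' : HasDerivAt (fun s : ℝ => gC (t + s)) 0 (t - t) := by
        rw [sub_self]; exact h1
      have h4 := HasDerivAt.comp_sub_const (f := fun s : ℝ => gC (t + s)) (f' := 0) t t h1'
      have h5 : (fun x : ℝ => gC (t + (x - t))) = gC := by
        funext x
        congr 1
        ring
      rwa [h5] at h4
    have hconst := is_const_of_deriv_eq_zero (𝕜 := ℝ)
      (fun t => (hgderiv t).differentiableAt) (fun t => (hgderiv t).deriv)
    have hval : ∀ t : ℝ, gC t = z τ0 u0 := by
      intro t
      have := hconst t τ0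
      rw [this]
      simp only [hg, hw0]
      congr 1
      abel
    have hform : ∀ t : ℝ,
        ∑ p ∈ S, (c p * Complex.exp (∑ j, w0 j * ν j p.2)) * (t:ℂ) ^ p.1
          * Complex.exp (μ p * t) = z τ0 u0 := by
      intro t
      rw [← hval t]
      simp only [hg]
      rw [hz t ((t:ℂ) • v + w0)]
      refine Finset.sum_congr rfl fun p _ => ?_
      have hexp : ∑ j, ((t:ℂ) • v + w0) j * ν j p.2 = μ p * t + ∑ j, w0 j * ν j p.2 := by
        simp only [Pi.add_apply, Pi.smul_apply, smul_eq_mul, hμ]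
        rw [Finset.sum_mul, ← Finset.sum_add_distrib]
        refine Finset.sum_congr rfl fun j _ => ?_
        ring
      rw [hexp, Complex.exp_add]
      ring
    have hC := exp_poly_const S (fun p => p.1) μ
      (fun p => c p * Complex.exp (∑ j, w0 j * ν j p.2)) (z τ0 u0) hform
    rw [hC]
    refine Finset.sum_congr rfl fun p _ => ?_
    by_cases hcond : p.1 = 0 ∧ μ p = 0
    · have hp2 : p.2 = 0 := (hv p.2).mp hcond.2
      rw [if_pos hcond, if_pos hcond, hp2]
      simp [hν0]
    · rw [if_neg hcond, if_neg hcond]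
  intro τ u
  rw [key τ u, ← key 0 0, hinit]
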